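/- The rank-one Dunkl kernel satisfies the Gaussian integral identity ∫_ℝ E_k(x, y) e^{-x²/2} |x|^{2k} dx = 2^{k+1/2} c_k^{-1} e^{y²/2} for every real y, where c_k = (∫_ℝ e^{-x²} |x|^{2k} dx)^{-1}. -/

import Mathlib

open MeasureTheory Real

set_option maxHeartbeats 2000000

namespace DunklAux
open Set

lemma my_integrable_comp_abs {f : ℝ → ℝ} (hf : IntegrableOn f (Ioi 0)) :
    Integrable (fun x : ℝ => f |x|) := by
  have hIoi : IntegrableOn (fun x : ℝ => f |x|) (Ioi 0) := by
    apply hf.congr_fun (fun x hx => ?_) measurableSet_Ioi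
    rw [abs_eq_self.mpr (le_of_lt hx)]
  have int_Iic : IntegrableOn (fun x : ℝ ↦ f |x|) (Iic 0) := by
    rw [← Measure.map_neg_eq_self (volume : Measure ℝ)]
    let m : MeasurableEmbedding fun x : ℝ => -x := (Homeomorph.neg ℝ).measurableEmbedding
    rw [m.integrableOn_map_iff]
    simp_rw [Function.comp_def, abs_neg, neg_preimage, neg_Iic, neg_zero]
    exact (integrableOn_Ici_iff_integrableOn_Ioi).mpr hIoi
  have := int_Iic.union hIoi
  rwa [Iic_union_Ioi, integrableOn_univ] at this

lemma gauss_moment_int {b q : ℝ} (hb : 0 < b) (hq : 0 ≤ q) :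
    Integrable (fun x : ℝ => |x| ^ q * Real.exp (-b * x ^ 2)) := by
  have h := my_integrable_comp_abs (f := fun t => t ^ q * Real.exp (-b * t ^ 2))
    (integrableOn_rpow_mul_exp_neg_mul_sq hb (by linarith))
  apply h.congr
  filter_upwards with x
  simp only [sq_abs]

lemma gauss_moment {b q : ℝ} (hb : 0 < b) (hq : 0 ≤ q) :
    (∫ x : ℝ, |x| ^ q * Real.exp (-b * x ^ 2))
      = b ^ (-(q + 1) / 2) * Real.Gamma ((q + 1) / 2) := by
  have h1 : (∫ x : ℝ, |x| ^ q * Real.exp (-b * x ^ 2))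
      = ∫ x : ℝ, (fun t : ℝ => t ^ q * Real.exp (-b * t ^ 2)) |x| := by
    congr 1; funext x; simp only []; rw [sq_abs]
  rw [h1, integral_comp_abs (f := fun t : ℝ => t ^ q * Real.exp (-b * t ^ 2))]
  have h2 : (∫ x in Ioi (0:ℝ), x ^ q * Real.exp (-b * x ^ 2))
      = ∫ x in Ioi (0:ℝ), x ^ q * Real.exp (-b * x ^ (2:ℝ)) := by
    refine setIntegral_congr_fun measurableSet_Ioi (fun x hx => ?_)
    rw [Real.rpow_two]
  rw [h2, integral_rpow_mul_exp_neg_mul_rpow two_pos (by linarith) hb]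
  ring

lemma Gamma_lb {c : ℝ} (hc : 1/2 ≤ c) (n : ℕ) :
    Real.Gamma c * (1/2) ^ n ≤ Real.Gamma ((n : ℝ) + c) := by
  induction n with
  | zero => simp
  | succ n ih =>
    have hnc : (0:ℝ) < (n:ℝ) + c := by linarith [Nat.cast_nonneg (α := ℝ) n]
    have h1 : ((n+1 : ℕ) : ℝ) + c = ((n:ℝ) + c) + 1 := by push_cast; ring
    rw [h1, Real.Gamma_add_one (by linarith [Nat.cast_nonneg (α := ℝ) n])]
    calc Real.Gamma c * (1/2) ^ (n+1) = (1/2) * (Real.Gamma c * (1/2)^n) := by ring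
    _ ≤ ((n:ℝ) + c) * Real.Gamma ((n:ℝ) + c) := by
        apply mul_le_mul (by linarith) ih (by positivity) (le_of_lt hnc)

lemma summable_term {c : ℝ} (hc : 1/2 ≤ c) (t : ℝ) :
    Summable (fun n : ℕ => t ^ (2 * n) / ((n.factorial : ℝ) * Real.Gamma ((n : ℝ) + c))) := by
  have hc0 : 0 < c := by linarith
  have hΓ : 0 < Real.Gamma c := Real.Gamma_pos_of_pos hc0
  apply Summable.of_nonneg_of_le
    (f := fun n : ℕ => (2 * t^2) ^ n / n.factorial * (Real.Gamma c)⁻¹)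
  · intro n
    have : (0:ℝ) < Real.Gamma ((n:ℝ) + c) :=
      Real.Gamma_pos_of_pos (by linarith [Nat.cast_nonneg (α := ℝ) n])
    rw [pow_mul]
    positivity
  · intro n
    have hg : (0:ℝ) < Real.Gamma ((n:ℝ) + c) :=
      Real.Gamma_pos_of_pos (by linarith [Nat.cast_nonneg (α := ℝ) n])
    have hlb := Gamma_lb hc n
    have hfac : (0:ℝ) < n.factorial := by positivity
    rw [div_le_iff₀ (by positivity), pow_mul]
    have h2 : (2 * t^2)^n / n.factorial * (Real.Gamma c)⁻¹ * (n.factorial * Real.Gamma ((n:ℝ)+c)) =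
        (t^2)^n * ((Real.Gamma ((n:ℝ)+c)) * (2^n * (Real.Gamma c)⁻¹)) := by
      field_simp
      ring
    rw [h2]
    have h3 : (1:ℝ) ≤ Real.Gamma ((n:ℝ)+c) * (2^n * (Real.Gamma c)⁻¹) := by
      rw [show Real.Gamma ((n:ℝ)+c) * (2^n * (Real.Gamma c)⁻¹)
          = Real.Gamma ((n:ℝ)+c) * 2^n / Real.Gamma c by ring]
      rw [le_div_iff₀ hΓ, one_mul]
      calc Real.Gamma c = (Real.Gamma c * (1/2)^n) * 2^n := by
            rw [mul_assoc, ← mul_pow]; norm_num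
      _ ≤ Real.Gamma ((n:ℝ)+c) * 2^n := by
            apply mul_le_mul_of_nonneg_right hlb (by positivity)
    nlinarith [pow_nonneg (sq_nonneg t) n]
  · exact (Real.summable_pow_div_factorial (2*t^2)).mul_right _

variable {k : ℝ} (hk : 0 ≤ k)
include hk

lemma cont_w : Continuous (fun x : ℝ => Real.exp (-x^2/2) * |x| ^ (2*k)) := by
  apply Continuous.mul
  · exact Real.continuous_exp.comp (by continuity)
  · exact continuous_abs.rpow_const (fun x => Or.inr (by positivity))

lemma pointwise_eq (m : ℕ) (x : ℝ) :
    x ^ (2*m) * (Real.exp (-x^2/2) * |x| ^ (2*k))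
      = |x| ^ ((2*m : ℝ) + 2*k) * Real.exp (-(1/2) * x ^ 2) := by
  have h1 : x ^ (2*m) = |x| ^ ((2*m : ℕ) : ℝ) := by
    rw [Real.rpow_natCast]
    rw [pow_mul, pow_mul, sq_abs]
  rw [h1, Real.rpow_add_of_nonneg (abs_nonneg x) (by positivity) (by positivity)]
  push_cast
  ring_nf

lemma int_pow (m : ℕ) :
    Integrable (fun x : ℝ => x ^ m * (Real.exp (-x^2/2) * |x| ^ (2*k))) := by
  apply Integrable.mono' (gauss_moment_int (b := 1/2) (q := m + 2*k) (by norm_num) (by positivity))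
  · exact ((continuous_pow m).mul (cont_w hk)).aestronglyMeasurable
  · filter_upwards with x
    have hW : 0 ≤ Real.exp (-x^2/2) * |x| ^ (2*k) := by positivity
    rw [Real.norm_eq_abs, abs_mul, abs_of_nonneg hW, abs_pow]
    have h1 : |x| ^ m = |x| ^ ((m : ℕ) : ℝ) := by rw [Real.rpow_natCast]
    rw [h1, mul_comm (|x| ^ ((m:ℕ):ℝ)) _,
      Real.rpow_add_of_nonneg (abs_nonneg x) (by positivity) (by positivity)]
    have : Real.exp (-x^2/2) = Real.exp (-(1/2) * x^2) := by ring_nf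
    rw [this]
    exact le_of_eq (by push_cast; ring)

lemma moment_even (m : ℕ) :
    (∫ x : ℝ, x ^ (2*m) * (Real.exp (-x^2/2) * |x| ^ (2*k)))
      = 2 ^ ((m : ℝ) + k + 1/2) * Real.Gamma ((m : ℝ) + k + 1/2) := by
  have h1 : (∫ x : ℝ, x ^ (2*m) * (Real.exp (-x^2/2) * |x| ^ (2*k)))
      = ∫ x : ℝ, |x| ^ ((2*m : ℝ) + 2*k) * Real.exp (-(1/2) * x ^ 2) := by
    congr 1; funext x; exact pointwise_eq hk m x
  rw [h1, gauss_moment (by norm_num) (by positivity)]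
  have h2 : ((2*(m:ℝ) + 2*k) + 1) / 2 = (m : ℝ) + k + 1/2 := by ring
  have h3 : ((1:ℝ)/2) ^ (-(2*(m:ℝ) + 2*k + 1) / 2) = 2 ^ ((2*(m:ℝ) + 2*k + 1)/2) := by
    rw [show (-(2*(m:ℝ)+2*k+1)/2) = -((2*(m:ℝ)+2*k+1)/2) by ring, one_div,
      ← Real.rpow_neg_one (2:ℝ), ← Real.rpow_mul (by norm_num), neg_one_mul,
      Real.rpow_neg (by norm_num), Real.rpow_neg (by norm_num), inv_inv]
  rw [h3, h2]

lemma moment_odd_zero (m : ℕ) :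
    (∫ x : ℝ, x ^ (2*m+1) * (Real.exp (-x^2/2) * |x| ^ (2*k))) = 0 := by
  have h := integral_neg_eq_self
    (fun x : ℝ => x ^ (2*m+1) * (Real.exp (-x^2/2) * |x| ^ (2*k))) volume
  have h2 : (∫ x : ℝ, (-x) ^ (2*m+1) * (Real.exp (-(-x)^2/2) * |-x| ^ (2*k)))
      = ∫ x : ℝ, -(x ^ (2*m+1) * (Real.exp (-x^2/2) * |x| ^ (2*k))) := by
    congr 1; funext x
    rw [Odd.neg_pow ⟨m, by ring⟩, neg_sq, abs_neg]
    ring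
  rw [h2, integral_neg] at h
  linarith

end DunklAux

/-- `j_α(it)`: the normalized Bessel function evaluated at a purely imaginary argument,
`j_α(it) = Γ(α+1) Σ_{n≥0} (t/2)^{2n} / (n! Γ(n+α+1))`. -/
noncomputable def besselI (α t : ℝ) : ℝ :=
  Real.Gamma (α + 1) *
    ∑' n : ℕ, (t / 2) ^ (2 * n) / ((n.factorial : ℝ) * Real.Gamma ((n : ℝ) + α + 1))

/-- The rank-one Dunkl kernel
`E_k(x,y) = j_{k-1/2}(ixy) + (xy/(2k+1)) j_{k+1/2}(ixy)`. -/
noncomputable def dunklKernel (k x y : ℝ) : ℝ :=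
  besselI (k - 1/2) (x * y) + (x * y) / (2 * k + 1) * besselI (k + 1/2) (x * y)

/-- The normalizing constant `c_k = (∫_ℝ e^{-x²}|x|^{2k}dx)⁻¹`. -/
noncomputable def ck (k : ℝ) : ℝ :=
  (∫ x : ℝ, Real.exp (-x ^ 2) * |x| ^ (2 * k))⁻¹

open DunklAux in
/-- Gaussian integral identity for the rank-one Dunkl kernel:
`∫_ℝ E_k(x,y) e^{-x²/2} |x|^{2k} dx = 2^{k+1/2} c_k⁻¹ e^{y²/2}`. -/
theorem dunkl_kernel_gaussian_integral (k : ℝ) (hk : 0 ≤ k) (y : ℝ) :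
    ∫ x : ℝ, dunklKernel k x y * Real.exp (-x ^ 2 / 2) * |x| ^ (2 * k)
      = (2 : ℝ) ^ (k + 1/2) * (ck k)⁻¹ * Real.exp (y ^ 2 / 2) := by
  classical
  set P : ℝ → ℝ := fun x => Real.exp (-x^2/2) * |x| ^ (2*k) with hP
  have hc1 : (1:ℝ)/2 ≤ k + 1/2 := by linarith
  have hc2 : (1:ℝ)/2 ≤ k + 3/2 := by linarith
  have hΓ1 : ∀ n : ℕ, (0:ℝ) < Real.Gamma ((n:ℝ) + (k + 1/2)) := fun n =>
    Real.Gamma_pos_of_pos (by linarith [Nat.cast_nonneg (α := ℝ) n])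
  have hΓ2 : ∀ n : ℕ, (0:ℝ) < Real.Gamma ((n:ℝ) + (k + 3/2)) := fun n =>
    Real.Gamma_pos_of_pos (by linarith [Nat.cast_nonneg (α := ℝ) n])
  have hfac : ∀ n : ℕ, (0:ℝ) < n.factorial := fun n => by positivity
  -- coefficients
  set cA : ℕ → ℝ := fun n =>
    Real.Gamma (k + 1/2) * (y/2) ^ (2*n) / ((n.factorial : ℝ) * Real.Gamma ((n:ℝ) + (k + 1/2)))
    with hcA
  set cB : ℕ → ℝ := fun n =>
    (y / (2*k+1)) * Real.Gamma (k + 3/2) * (y/2) ^ (2*n)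
      / ((n.factorial : ℝ) * Real.Gamma ((n:ℝ) + (k + 3/2))) with hcB
  set F : ℕ → ℝ → ℝ := fun n x => cA n * (x ^ (2*n) * P x) + cB n * (x ^ (2*n+1) * P x) with hF
  -- moments
  set M : ℕ → ℝ := fun m => 2 ^ ((m : ℝ) + k + 1/2) * Real.Gamma ((m : ℝ) + k + 1/2) with hM
  have hMdef : ∀ m : ℕ, M m = 2 ^ ((m : ℝ) + k + 1/2) * Real.Gamma ((m : ℝ) + k + 1/2) :=
    fun m => rfl
  have hMpos : ∀ m : ℕ, 0 < M m := by
    intro m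
    have := Real.Gamma_pos_of_pos (show (0:ℝ) < (m:ℝ) + k + 1/2 by
      linarith [Nat.cast_nonneg (α := ℝ) m])
    positivity
  -- integrability of pieces
  have intA : ∀ n : ℕ, Integrable (fun x => cA n * (x ^ (2*n) * P x)) := fun n =>
    (int_pow hk (2*n)).const_mul _
  have intB : ∀ n : ℕ, Integrable (fun x => cB n * (x ^ (2*n+1) * P x)) := fun n =>
    (int_pow hk (2*n+1)).const_mul _
  have intF : ∀ n : ℕ, Integrable (F n) := fun n => (intA n).add (intB n)
  -- value of each integral
  have hIntF : ∀ n : ℕ, (∫ x : ℝ, F n x) = cA n * M n := by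
    intro n
    rw [hF]
    simp only []
    rw [integral_add (intA n) (intB n), integral_const_mul, integral_const_mul,
      moment_even hk n, moment_odd_zero hk n, mul_zero, add_zero, hM]
  -- key simplification of cA n * M n
  have hAM : ∀ n : ℕ, cA n * M n
      = (Real.Gamma (k + 1/2) * 2 ^ (k + 1/2)) * ((y^2/2)^n / (n.factorial : ℝ)) := by
    intro n
    have e1 : ((n:ℝ) + k + 1/2) = (n:ℝ) + (k + 1/2) := by ring
    rw [hcA, hM]
    simp only []
    rw [e1]
    have e2 : (2:ℝ) ^ ((n:ℝ) + (k + 1/2)) = 2 ^ (n:ℕ) * 2 ^ (k + 1/2) := by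
      rw [Real.rpow_add two_pos, Real.rpow_natCast]
    rw [e2]
    have hΓ := (hΓ1 n).ne'
    have h4 : ((y/2)^(2*n) : ℝ) = (y^2)^n / 4^n := by
      rw [pow_mul]
      congr 1
      ring_nf; norm_num
    rw [h4]
    field_simp
    ring_nf
    rw [mul_assoc, ← mul_pow]; norm_num
  -- Step A: pointwise series expansion
  have hxsum1 : ∀ x : ℝ, Summable (fun n : ℕ =>
      (x*y/2)^(2*n) / ((n.factorial:ℝ) * Real.Gamma ((n:ℝ) + (k+1/2)))) :=
    fun x => summable_term hc1 (x*y/2)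
  have hxsum2 : ∀ x : ℝ, Summable (fun n : ℕ =>
      (x*y/2)^(2*n) / ((n.factorial:ℝ) * Real.Gamma ((n:ℝ) + (k+3/2)))) :=
    fun x => summable_term hc2 (x*y/2)
  have idA : ∀ (x : ℝ) (n : ℕ),
      (Real.Gamma (k+1/2) * P x) * ((x*y/2)^(2*n) / ((n.factorial:ℝ) * Real.Gamma ((n:ℝ) + (k+1/2))))
        = cA n * (x ^ (2*n) * P x) := by
    intro x n
    rw [hcA]
    simp only []
    rw [show x*y/2 = x*(y/2) by ring, mul_pow]
    ring
  have idB : ∀ (x : ℝ) (n : ℕ),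
      ((x*y/(2*k+1)) * Real.Gamma (k+3/2) * P x)
          * ((x*y/2)^(2*n) / ((n.factorial:ℝ) * Real.Gamma ((n:ℝ) + (k+3/2))))
        = cB n * (x ^ (2*n+1) * P x) := by
    intro x n
    rw [hcB]
    simp only []
    rw [show x*y/2 = x*(y/2) by ring, mul_pow]
    rw [pow_succ]
    ring
  have hsA : ∀ x : ℝ, Summable (fun n : ℕ => cA n * (x ^ (2*n) * P x)) := by
    intro x
    exact Summable.congr ((hxsum1 x).mul_left (Real.Gamma (k+1/2) * P x)) (idA x)
  have hsB : ∀ x : ℝ, Summable (fun n : ℕ => cB n * (x ^ (2*n+1) * P x)) := by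
    intro x
    exact Summable.congr ((hxsum2 x).mul_left ((x*y/(2*k+1)) * Real.Gamma (k+3/2) * P x)) (idB x)
  have hpt : ∀ x : ℝ, dunklKernel k x y * Real.exp (-x ^ 2 / 2) * |x| ^ (2 * k)
      = ∑' n, F n x := by
    intro x
    have eC1 : k - 1/2 + 1 = k + 1/2 := by ring
    have eC2 : k + 1/2 + 1 = k + 3/2 := by ring
    have eArg1 : ∀ n : ℕ, (n:ℝ) + (k - 1/2) + 1 = (n:ℝ) + (k + 1/2) := fun n => by ring
    have eArg2 : ∀ n : ℕ, (n:ℝ) + (k + 1/2) + 1 = (n:ℝ) + (k + 3/2) := fun n => by ring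
    have hFx : ∑' n, F n x
        = (∑' n, cA n * (x ^ (2*n) * P x)) + ∑' n, cB n * (x ^ (2*n+1) * P x) := by
      rw [hF]
      exact Summable.tsum_add (hsA x) (hsB x)
    have hA' : (∑' n, cA n * (x ^ (2*n) * P x))
        = Real.Gamma (k+1/2) * P x
          * ∑' n : ℕ, (x*y/2)^(2*n) / ((n.factorial:ℝ) * Real.Gamma ((n:ℝ) + (k+1/2))) := by
      rw [← tsum_mul_left]
      exact tsum_congr fun n => (idA x n).symm
    have hB' : (∑' n, cB n * (x ^ (2*n+1) * P x))
        = (x*y/(2*k+1)) * Real.Gamma (k+3/2) * P x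
          * ∑' n : ℕ, (x*y/2)^(2*n) / ((n.factorial:ℝ) * Real.Gamma ((n:ℝ) + (k+3/2))) := by
      rw [← tsum_mul_left]
      exact tsum_congr fun n => (idB x n).symm
    rw [hFx, hA', hB', dunklKernel, besselI, besselI, eC1, eC2]
    simp only [eArg1, eArg2]
    rw [hP]
    simp only []
    ring
  -- Step B: norm bounds
  have hnormA : ∀ n : ℕ, (∫ x : ℝ, ‖cA n * (x ^ (2*n) * P x)‖) = cA n * M n := by
    intro n
    have hcA0 : 0 ≤ cA n := by
      rw [hcA]
      simp only []
      have h1 : (0:ℝ) ≤ (y/2)^(2*n) := by rw [pow_mul]; positivity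
      have h2 := Real.Gamma_pos_of_pos (show (0:ℝ) < k + 1/2 by linarith)
      have h3 := hΓ1 n
      positivity
    have : (fun x : ℝ => ‖cA n * (x ^ (2*n) * P x)‖) = fun x => cA n * (x ^ (2*n) * P x) := by
      funext x
      have hPx : 0 ≤ P x := by rw [hP]; positivity
      have hx2 : (0:ℝ) ≤ x ^ (2*n) := by rw [pow_mul]; positivity
      rw [Real.norm_eq_abs, abs_of_nonneg (by positivity)]
    rw [this, integral_const_mul, moment_even hk n]
  have habs : ∀ (x : ℝ) (n : ℕ), ‖cB n * (x ^ (2*n+1) * P x)‖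
      = |cB n| * (|x| ^ (2*n+1) * P x) := by
    intro x n
    have hPx : 0 ≤ P x := by rw [hP]; positivity
    rw [Real.norm_eq_abs, abs_mul, abs_mul, abs_pow, abs_of_nonneg hPx]
  have hintabsB : ∀ n : ℕ, Integrable (fun x : ℝ => |x| ^ (2*n+1) * P x) := by
    intro n
    apply (int_pow hk (2*n+1)).abs.congr
    filter_upwards with x
    have hPx : 0 ≤ P x := by rw [hP]; positivity
    rw [abs_mul, abs_pow, abs_of_nonneg hPx]
  have hmomB : ∀ n : ℕ, (∫ x : ℝ, |x| ^ (2*n+1) * P x) ≤ M n + M (n+1) := by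
    intro n
    have hint2 : Integrable (fun x : ℝ => x ^ (2*n) * P x + x ^ (2*(n+1)) * P x) :=
      (int_pow hk (2*n)).add (int_pow hk (2*(n+1)))
    have hle : ∀ x : ℝ, |x| ^ (2*n+1) * P x ≤ x ^ (2*n) * P x + x ^ (2*(n+1)) * P x := by
      intro x
      have hPx : 0 ≤ P x := by rw [hP]; positivity
      have ht : 0 ≤ |x| := abs_nonneg x
      have e0 : x ^ (2*n) = |x| ^ (2*n) := by rw [pow_mul, pow_mul, sq_abs]
      have e2 : x ^ (2*(n+1)) = |x| ^ (2*n) * |x|^2 := by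
        rw [pow_mul, pow_mul, sq_abs]; ring
      rw [e0, e2, pow_succ]
      have key : |x| ^ (2*n) * |x| ≤ |x| ^ (2*n) + |x| ^ (2*n) * |x|^2 := by
        nlinarith [pow_nonneg ht (2*n), sq_nonneg (|x| - 1)]
      nlinarith [mul_le_mul_of_nonneg_right key hPx]
    have := integral_mono (hintabsB n) hint2 hle
    rwa [integral_add (int_pow hk (2*n)) (int_pow hk (2*(n+1))), moment_even hk n,
      moment_even hk (n+1), ← hMdef n, ← hMdef (n+1)] at this
  have hnormB : ∀ n : ℕ, (∫ x : ℝ, ‖cB n * (x ^ (2*n+1) * P x)‖)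
      ≤ |cB n| * (M n + M (n+1)) := by
    intro n
    have : (∫ x : ℝ, ‖cB n * (x ^ (2*n+1) * P x)‖)
        = |cB n| * ∫ x : ℝ, |x| ^ (2*n+1) * P x := by
      rw [← integral_const_mul]
      congr 1
      funext x
      rw [habs x n]
    rw [this]
    exact mul_le_mul_of_nonneg_left (hmomB n) (abs_nonneg _)
  -- M is monotone
  have hMsucc : ∀ n : ℕ, M (n+1) = 2 * ((n:ℝ) + k + 1/2) * M n := by
    intro n
    have hpos : (0:ℝ) < (n:ℝ) + k + 1/2 := by linarith [Nat.cast_nonneg (α := ℝ) n]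
    rw [hMdef n, hMdef (n+1)]
    have e1 : ((n+1:ℕ):ℝ) + k + 1/2 = ((n:ℝ) + k + 1/2) + 1 := by push_cast; ring
    rw [e1, Real.Gamma_add_one hpos.ne', Real.rpow_add two_pos, Real.rpow_one]
    ring
  have hMn_le : ∀ n : ℕ, M n ≤ M (n+1) := by
    intro n
    rw [hMsucc n]
    nlinarith [hMpos n, Nat.cast_nonneg (α := ℝ) n]
  -- |cB n|
  have habsB : ∀ n : ℕ, |cB n| = |y| / (2*k+1) * Real.Gamma (k+3/2) * (y/2)^(2*n)
      / ((n.factorial:ℝ) * Real.Gamma ((n:ℝ) + (k+3/2))) := by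
    intro n
    have h2k : (0:ℝ) < 2*k+1 := by linarith
    have hΓ2' := Real.Gamma_pos_of_pos (show (0:ℝ) < k + 3/2 by linarith)
    have hpow : (0:ℝ) ≤ (y/2)^(2*n) := by rw [pow_mul]; positivity
    rw [hcB]
    simp only []
    rw [abs_div, abs_mul, abs_mul, abs_div, abs_of_pos h2k, abs_of_pos hΓ2',
      abs_of_nonneg hpow, abs_of_pos (mul_pos (hfac n) (hΓ2 n))]
  have hBM : ∀ n : ℕ, |cB n| * M (n+1)
      = (|y| / (2*k+1) * Real.Gamma (k+3/2) * (2 ^ (k+1/2) * 2))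
        * ((y^2/2)^n / (n.factorial:ℝ)) := by
    intro n
    rw [habsB n, hMdef (n+1)]
    have e1 : ((n+1:ℕ):ℝ) + k + 1/2 = (n:ℝ) + (k + 3/2) := by push_cast; ring
    rw [e1]
    have e2 : (2:ℝ) ^ ((n:ℝ) + (k + 3/2)) = 2 ^ (n:ℕ) * (2 ^ (k + 1/2) * 2) := by
      rw [show (n:ℝ) + (k + 3/2) = (n:ℝ) + (k + 1/2) + 1 by ring, Real.rpow_add two_pos,
        Real.rpow_add two_pos, Real.rpow_one, Real.rpow_natCast]
      ring
    rw [show (2:ℝ) ^ ((n:ℝ) + (k + 3/2)) * Real.Gamma ((n:ℝ) + (k+3/2))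
        = (2 ^ (n:ℕ) * (2 ^ (k + 1/2) * 2)) * Real.Gamma ((n:ℝ) + (k+3/2)) from by rw [e2]]
    have hΓ := (hΓ2 n).ne'
    have h4 : ((y/2)^(2*n) : ℝ) = (y^2)^n / 4^n := by
      rw [pow_mul]
      congr 1
      ring_nf; norm_num
    rw [h4]
    have h5 : (4:ℝ)^n = 2^n * 2^n := by rw [show (4:ℝ) = 2*2 by norm_num, mul_pow]
    rw [div_pow, h5]
    have h6 : ((2:ℝ)^n) ≠ 0 := by positivity
    field_simp
  -- summability of integral norms
  have hFnorm : ∀ n : ℕ, (∫ x : ℝ, ‖F n x‖) ≤ cA n * M n + 2 * (|cB n| * M (n+1)) := by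
    intro n
    have h1 : (∫ x : ℝ, ‖F n x‖)
        ≤ ∫ x : ℝ, ‖cA n * (x ^ (2*n) * P x)‖ + ‖cB n * (x ^ (2*n+1) * P x)‖ := by
      apply integral_mono (intF n).norm ((intA n).norm.add ((intB n).norm))
      intro x
      rw [hF]
      exact norm_add_le _ _
    rw [integral_add (intA n).norm (intB n).norm] at h1
    have h2 := hnormB n
    have h3 : |cB n| * (M n + M (n+1)) ≤ 2 * (|cB n| * M (n+1)) := by
      have := hMn_le n
      nlinarith [abs_nonneg (cB n)]
    calc (∫ x : ℝ, ‖F n x‖) ≤ _ := h1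
    _ ≤ cA n * M n + |cB n| * (M n + M (n+1)) := by
        rw [hnormA n]
        linarith [hnormB n]
    _ ≤ cA n * M n + 2 * (|cB n| * M (n+1)) := by linarith
  have hFsum : Summable (fun n : ℕ => ∫ x : ℝ, ‖F n x‖) := by
    apply Summable.of_nonneg_of_le
      (f := fun n : ℕ =>
        (Real.Gamma (k + 1/2) * 2 ^ (k + 1/2)) * ((y^2/2)^n / (n.factorial:ℝ))
        + 2 * ((|y| / (2*k+1) * Real.Gamma (k+3/2) * (2 ^ (k+1/2) * 2))
            * ((y^2/2)^n / (n.factorial:ℝ))))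
    · intro n
      exact integral_nonneg fun x => norm_nonneg _
    · intro n
      rw [← hAM n, ← hBM n]
      exact hFnorm n
    · exact ((Real.summable_pow_div_factorial (y^2/2)).mul_left _).add
        (((Real.summable_pow_div_factorial (y^2/2)).mul_left _).mul_left 2)
  -- conclusion
  have hint : (∫ x : ℝ, dunklKernel k x y * Real.exp (-x ^ 2 / 2) * |x| ^ (2 * k))
      = ∫ x : ℝ, ∑' n, F n x := by
    congr 1
    funext x
    exact hpt x
  have hexp : (∑' n : ℕ, (y^2/2)^n / (n.factorial:ℝ)) = Real.exp (y^2/2) := by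
    rw [Real.exp_eq_exp_ℝ, NormedSpace.exp_eq_tsum_div]
  have hck : (ck k)⁻¹ = Real.Gamma (k + 1/2) := by
    rw [ck, inv_inv]
    have h1 : (∫ x : ℝ, Real.exp (-x ^ 2) * |x| ^ (2 * k))
        = ∫ x : ℝ, |x| ^ (2 * k) * Real.exp (-1 * x ^ 2) := by
      congr 1
      funext x
      rw [neg_one_mul, mul_comm]
    rw [h1, gauss_moment one_pos (by positivity), Real.one_rpow, one_mul,
      show (2*k+1)/2 = k + 1/2 by ring]
  rw [hint, ← integral_tsum_of_summable_integral_norm intF hFsum]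
  rw [tsum_congr hIntF, tsum_congr hAM, tsum_mul_left, hexp, hck]
  ring
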